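/- Let (ū, x̄, T̄) be a weak Pareto optimal solution of the free-time multi-objective control problem (MP)_r with T̄ > 0, and let real numbers a, A satisfy 0 < a < T̄ ≤ A. Define v̄(s) = T̄, w̄(s) = ū(T̄·s), τ̄(s) = T̄·s, and ȳ(s) = x̄(T̄·s) for s ∈ [0,1]. Then (v̄, w̄, τ̄, ȳ) is a weak Pareto optimal solution of the fixed-interval problem (MP)_{[0,1]}. -/

import Mathlib

open MeasureTheory Set
open scoped Manifold

noncomputable section


variable {n m r j k : ℕ}
variable {H : Type*} [TopologicalSpace H]
variable {M : Type*} [TopologicalSpace M] [ChartedSpace H M]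


section Auxiliary

open Metric Filter

private lemma lip_image_null' {K : NNReal} {g : ℝ → ℝ} {s N : Set ℝ}
    (hg : LipschitzOnWith K g s) (hN : N ⊆ s) (h0 : volume N = 0) :
    volume (g '' N) = 0 := by
  have h := (hg.mono hN).hausdorffMeasure_image_le (zero_le_one (α := ℝ))
  rw [MeasureTheory.hausdorffMeasure_real] at h
  rw [h0, mul_zero] at h
  exact le_antisymm (by simpa using h) zero_le

private lemma cb_eq_uIcc' (x y : ℝ) : closedBall ((x + y) / 2) (|y - x| / 2) = Set.uIcc x y := by
  rw [Real.closedBall_eq_Icc, Set.uIcc]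
  rcases le_total x y with h | h
  · rw [abs_of_nonneg (by linarith), min_eq_left h, max_eq_right h]
    congr 1 <;> ring
  · rw [abs_of_nonpos (by linarith), min_eq_right h, max_eq_left h]
    congr 1 <;> ring

private lemma ae_hasDerivAt_of_integrable' {v : ℝ → ℝ} (hv : Integrable v) :
    ∀ᵐ x, HasDerivAt (fun t => ∫ μ in (0:ℝ)..t, v μ) (v x) x := by
  filter_upwards [IsUnifLocDoublingMeasure.ae_tendsto_average_norm_sub
    (μ := (volume : Measure ℝ)) hv.locallyIntegrable 1] with x hx
  rw [hasDerivAt_iff_tendsto_slope]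
  have hδ : Tendsto (fun y : ℝ => |y - x| / 2) (nhdsWithin x {x}ᶜ) (nhdsWithin 0 (Ioi 0)) := by
    apply tendsto_nhdsWithin_iff.2
    constructor
    · have h1 : Tendsto (fun y : ℝ => y - x) (nhds x) (nhds 0) := by
        have h0 : Tendsto (fun y : ℝ => y - x) (nhds x) (nhds (x - x)) :=
          tendsto_id.sub tendsto_const_nhds
        simpa using h0
      have := (h1.abs).div_const 2
      simpa using this.mono_left nhdsWithin_le_nhds
    · filter_upwards [self_mem_nhdsWithin] with y hy
      have : y - x ≠ 0 := sub_ne_zero.2 hy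
      have : |y - x| > 0 := abs_pos.2 this
      simpa using by positivity
  have hmem : ∀ᶠ y in nhdsWithin x {x}ᶜ,
      x ∈ closedBall ((x + y) / 2) (1 * (|y - x| / 2)) := by
    filter_upwards with y
    rw [one_mul, cb_eq_uIcc']
    exact Set.left_mem_uIcc
  have key := hx (fun y => (x + y) / 2) (fun y => |y - x| / 2) hδ hmem
  have hbound : ∀ᶠ y in nhdsWithin x {x}ᶜ,
      ‖slope (fun t => ∫ μ in (0:ℝ)..t, v μ) x y - v x‖
        ≤ ⨍ z in closedBall ((x + y) / 2) (|y - x| / 2), ‖v z - v x‖ := by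
    filter_upwards [self_mem_nhdsWithin] with y hy
    have hyx : y - x ≠ 0 := sub_ne_zero.2 hy
    have habs : (0:ℝ) < |y - x| := abs_pos.2 hyx
    have hint : (∫ μ in (0:ℝ)..y, v μ) - ∫ μ in (0:ℝ)..x, v μ = ∫ μ in x..y, v μ :=
      intervalIntegral.integral_interval_sub_left (hv.intervalIntegrable)
        (hv.intervalIntegrable)
    have hIcb : IntegrableOn (fun z => ‖v z - v x‖) (closedBall ((x + y) / 2) (|y - x| / 2)) := by
      exact ((hv.integrableOn.sub (integrableOn_const measure_closedBall_lt_top.ne)).norm)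
    have hsub : ∫ z in Set.uIoc x y, ‖v z - v x‖
        ≤ ∫ z in closedBall ((x + y) / 2) (|y - x| / 2), ‖v z - v x‖ := by
      apply setIntegral_mono_set hIcb
      · filter_upwards with z using norm_nonneg _
      · rw [cb_eq_uIcc']
        exact HasSubset.Subset.eventuallyLE Set.uIoc_subset_uIcc
    have h1 : ‖∫ z in x..y, (v z - v x)‖ ≤ ∫ z in Set.uIoc x y, ‖v z - v x‖ :=
      intervalIntegral.norm_integral_le_integral_norm_uIoc
    have h2 : ∫ z in x..y, (v z - v x) = (∫ z in x..y, v z) - (y - x) * v x := by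
      rw [intervalIntegral.integral_sub (hv.intervalIntegrable)
        (intervalIntegrable_const)]
      simp [smul_eq_mul]
    have havg : ⨍ z in closedBall ((x + y) / 2) (|y - x| / 2), ‖v z - v x‖
        = |y - x|⁻¹ * ∫ z in closedBall ((x + y) / 2) (|y - x| / 2), ‖v z - v x‖ := by
      rw [setAverage_eq, measureReal_def, Real.volume_closedBall]
      rw [show 2 * (|y - x| / 2) = |y - x| by ring, ENNReal.toReal_ofReal habs.le]
      simp [smul_eq_mul]
    rw [havg]
    have hslope : slope (fun t => ∫ μ in (0:ℝ)..t, v μ) x y - v x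
        = (y - x)⁻¹ * ((∫ z in x..y, v z) - (y - x) * v x) := by
      rw [slope_def_field, hint]
      field_simp
    rw [hslope, norm_mul, norm_inv, Real.norm_eq_abs, Real.norm_eq_abs]
    rw [← h2]
    have hmono := le_trans h1 hsub
    have hnn : (0:ℝ) ≤ |y - x|⁻¹ := by positivity
    calc |y - x|⁻¹ * |∫ z in x..y, (v z - v x)|
        ≤ |y - x|⁻¹ * ∫ z in closedBall ((x + y) / 2) (|y - x| / 2), ‖v z - v x‖ := by
          apply mul_le_mul_of_nonneg_left _ hnn
          simpa [Real.norm_eq_abs] using hmono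
      _ = _ := rfl
  have hT : Tendsto (fun y => slope (fun t => ∫ μ in (0:ℝ)..t, v μ) x y - v x)
      (nhdsWithin x {x}ᶜ) (nhds 0) := squeeze_zero_norm' hbound key
  have h := hT.add (tendsto_const_nhds (x := v x))
  simpa using h

private lemma ae_restrict_null_superset' {P : ℝ → Prop} {s : Set ℝ}
    (h : ∀ᵐ t ∂(volume.restrict s), P t) :
    ∃ N : Set ℝ, MeasurableSet N ∧ (volume.restrict s) N = 0 ∧ ∀ t, t ∉ N → P t := by
  rw [ae_iff] at h
  refine ⟨toMeasurable (volume.restrict s) {t | ¬ P t}, measurableSet_toMeasurable _ _, ?_, ?_⟩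
  · rw [measure_toMeasurable]; exact h
  · intro t ht
    by_contra hP
    exact ht (subset_toMeasurable _ _ hP)

private lemma ae_restrict_of_null_cover' {P : ℝ → Prop} {s B : Set ℝ} (hs : MeasurableSet s)
    (hB : volume B = 0) (h : ∀ t ∈ s, t ∉ B → P t) : ∀ᵐ t ∂(volume.restrict s), P t := by
  rw [ae_iff, Measure.restrict_apply' hs]
  apply measure_mono_null _ hB
  intro t ⟨ht1, ht2⟩
  by_contra htB
  exact ht1 (h t ht2 htB)

private lemma comp_chain' (I : ModelWithCorners ℝ (EuclideanSpace ℝ (Fin n)) H)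
    [IsManifold I (⊤ : ℕ∞) M]
    {y : ℝ → M} {g : ℝ → ℝ} {t c : ℝ} {V : TangentSpace I (y (g t))}
    (hy : HasMFDerivAt 𝓘(ℝ, ℝ) I y (g t)
      (ContinuousLinearMap.smulRight (1 : ℝ →L[ℝ] ℝ) V))
    (hg : HasDerivAt g c t) {W : TangentSpace I (y (g t))} (hW : c • V = W) :
    HasMFDerivAt 𝓘(ℝ, ℝ) I (fun s => y (g s)) t
      (ContinuousLinearMap.smulRight (1 : ℝ →L[ℝ] ℝ) W) := by
  have hgM : HasMFDerivAt 𝓘(ℝ, ℝ) 𝓘(ℝ, ℝ) g t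
      (ContinuousLinearMap.smulRight (1 : ℝ →L[ℝ] ℝ) c) := by
    rw [hasMFDerivAt_iff_hasFDerivAt]
    exact hg.hasFDerivAt
  have hcomp := hy.comp t hgM
  convert hcomp using 1
  · rfl
  apply ContinuousLinearMap.ext_ring
  simp only [ContinuousLinearMap.smulRight_apply, ContinuousLinearMap.comp_apply,
    ContinuousLinearMap.one_apply, one_smul, ← hW, smul_smul]
  norm_num
  change (1:ℝ) • (c • V) = ((1:ℝ) * c) • V
  rw [one_smul, one_mul]

end Auxiliary

/-- The curve `x : [0,T] → M` solves the control system `ẋ(t) = f(t, x(t), u(t))` for the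
control `u`: it is continuous on `[0,T]` and for a.e. `t ∈ (0,T)` it has manifold derivative
at `t` equal to the linear map sending `1` to `f(t, x(t), u(t))`. -/
def SolvesControlSystem (I : ModelWithCorners ℝ (EuclideanSpace ℝ (Fin n)) H)
    (f : ℝ → (p : M) → (Fin m → ℝ) → TangentSpace I p)
    (u : ℝ → Fin m → ℝ) (x : ℝ → M) (T : ℝ) : Prop :=
  ContinuousOn x (Icc 0 T) ∧
    ∀ᵐ t ∂(volume.restrict (Ioo (0 : ℝ) T)),
      HasMFDerivAt 𝓘(ℝ, ℝ) I x t
        (ContinuousLinearMap.smulRight (1 : ℝ →L[ℝ] ℝ) (f t (x t) (u t)))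

/-- A triple `(u, x, T)` is admissible for the free terminal-time multi-objective problem
`(MP)_r`: `T > 0`, `u` is a measurable `U`-valued control, `x` solves the control system on
`[0,T]`, and the endpoint constraints `φᵢ(x(0), x(T)) ≤ 0`, `ψ(x(0), x(T)) = 0` hold. -/
def AdmissibleFree (I : ModelWithCorners ℝ (EuclideanSpace ℝ (Fin n)) H)
    (f : ℝ → (p : M) → (Fin m → ℝ) → TangentSpace I p)
    (U : Set (Fin m → ℝ)) (φ : M × M → Fin j → ℝ) (ψ : M × M → Fin k → ℝ)
    (u : ℝ → Fin m → ℝ) (x : ℝ → M) (T : ℝ) : Prop :=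
  0 < T ∧ Measurable u ∧ (∀ t, u t ∈ U) ∧
    SolvesControlSystem I f u x T ∧
    (∀ i, φ (x 0, x T) i ≤ 0) ∧ ψ (x 0, x T) = 0

/-- `(u, x, T)` is a weak Pareto optimal solution of the free terminal-time problem `(MP)_r`:
it is admissible and no admissible triple strictly decreases every component of the cost
`φ₀`. -/
def WeakParetoFree (I : ModelWithCorners ℝ (EuclideanSpace ℝ (Fin n)) H)
    (f : ℝ → (p : M) → (Fin m → ℝ) → TangentSpace I p)
    (U : Set (Fin m → ℝ)) (φ₀ : M × M → Fin r → ℝ)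
    (φ : M × M → Fin j → ℝ) (ψ : M × M → Fin k → ℝ)
    (u : ℝ → Fin m → ℝ) (x : ℝ → M) (T : ℝ) : Prop :=
  AdmissibleFree I f U φ ψ u x T ∧
    ¬∃ (u' : ℝ → Fin m → ℝ) (x' : ℝ → M) (T' : ℝ),
        AdmissibleFree I f U φ ψ u' x' T' ∧
          ∀ i, φ₀ (x' 0, x' T') i < φ₀ (x 0, x T) i

/-- A quadruple `(v, w, τ, y)` is admissible for the fixed-interval problem `(MP)_{[0,1]}`:
`v : [0,1] → [a,A]` and `w : [0,1] → U` are measurable, `τ(s) = ∫₀ˢ v(μ) dμ`, `y` is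
continuous on `[0,1]` and for a.e. `s ∈ (0,1)` has manifold derivative at `s` equal to the
linear map sending `1` to `v(s) • f(τ(s), y(s), w(s))`, and the endpoint constraints hold. -/
def Admissible01 (I : ModelWithCorners ℝ (EuclideanSpace ℝ (Fin n)) H)
    (f : ℝ → (p : M) → (Fin m → ℝ) → TangentSpace I p)
    (U : Set (Fin m → ℝ)) (a A : ℝ) (φ : M × M → Fin j → ℝ) (ψ : M × M → Fin k → ℝ)
    (v : ℝ → ℝ) (w : ℝ → Fin m → ℝ) (τ : ℝ → ℝ) (y : ℝ → M) : Prop :=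
  Measurable v ∧ (∀ s ∈ Icc (0 : ℝ) 1, v s ∈ Icc a A) ∧
    Measurable w ∧ (∀ s, w s ∈ U) ∧
    (∀ s, τ s = ∫ μ in (0 : ℝ)..s, v μ) ∧
    ContinuousOn y (Icc 0 1) ∧
    (∀ᵐ s ∂(volume.restrict (Ioo (0 : ℝ) 1)),
      HasMFDerivAt 𝓘(ℝ, ℝ) I y s
        (ContinuousLinearMap.smulRight (1 : ℝ →L[ℝ] ℝ) (v s • f (τ s) (y s) (w s)))) ∧
    (∀ i, φ (y 0, y 1) i ≤ 0) ∧ ψ (y 0, y 1) = 0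

/-- `(v, w, τ, y)` is a weak Pareto optimal solution of the fixed-interval problem
`(MP)_{[0,1]}`: it is admissible and no admissible quadruple strictly decreases every
component of the cost `φ₀`. -/
def WeakPareto01 (I : ModelWithCorners ℝ (EuclideanSpace ℝ (Fin n)) H)
    (f : ℝ → (p : M) → (Fin m → ℝ) → TangentSpace I p)
    (U : Set (Fin m → ℝ)) (a A : ℝ) (φ₀ : M × M → Fin r → ℝ)
    (φ : M × M → Fin j → ℝ) (ψ : M × M → Fin k → ℝ)
    (v : ℝ → ℝ) (w : ℝ → Fin m → ℝ) (τ : ℝ → ℝ) (y : ℝ → M) : Prop :=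
  Admissible01 I f U a A φ ψ v w τ y ∧
    ¬∃ (v' : ℝ → ℝ) (w' : ℝ → Fin m → ℝ) (τ' : ℝ → ℝ) (y' : ℝ → M),
        Admissible01 I f U a A φ ψ v' w' τ' y' ∧
          ∀ i, φ₀ (y' 0, y' 1) i < φ₀ (y 0, y 1) i

/-- Lemma 3.2 of the paper. Let `(ū, x̄, T̄)` be a weak Pareto optimal
solution of the free terminal-time multi-objective problem `(MP)_r` with `T̄ > 0`, and let
`0 < a < T̄ ≤ A`. Define `v̄(s) = T̄`, `w̄(s) = ū(T̄·s)`, `τ̄(s) = T̄·s` and `ȳ(s) = x̄(T̄·s)`.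
Then `(v̄, w̄, τ̄, ȳ)` is a weak Pareto optimal solution of the fixed-interval problem
`(MP)_{[0,1]}`. -/
theorem weakPareto01_of_weakParetoFree
    (I : ModelWithCorners ℝ (EuclideanSpace ℝ (Fin n)) H) [IsManifold I (⊤ : ℕ∞) M]
    (f : ℝ → (p : M) → (Fin m → ℝ) → TangentSpace I p)
    (U : Set (Fin m → ℝ)) (φ₀ : M × M → Fin r → ℝ)
    (φ : M × M → Fin j → ℝ) (ψ : M × M → Fin k → ℝ)
    (u : ℝ → Fin m → ℝ) (x : ℝ → M) (T : ℝ)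
    (hPareto : WeakParetoFree I f U φ₀ φ ψ u x T)
    (hT : 0 < T) (a A : ℝ) (ha : 0 < a) (haT : a < T) (hTA : T ≤ A) :
    WeakPareto01 I f U a A φ₀ φ ψ
      (fun _ => T) (fun s => u (T * s)) (fun s => T * s) (fun s => x (T * s)) := by
  obtain ⟨⟨hT0, hum, huU, ⟨hxc, hxd⟩, hφx, hψx⟩, hopt⟩ := hPareto
  have hA0 : (0:ℝ) < A := lt_of_lt_of_le hT0 hTA
  constructor
  · -- Admissibility of the rescaled quadruple
    refine ⟨measurable_const, fun s _ => ⟨haT.le, hTA⟩,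
      hum.comp (measurable_const_mul T), fun s => huU _, ?_, ?_, ?_, ?_, ?_⟩
    · intro s; simp [mul_comm]
    · apply hxc.comp (continuous_const.mul continuous_id).continuousOn
      intro s hs
      have hmem : T * s ∈ Icc 0 T := ⟨by nlinarith [hs.1], by nlinarith [hs.2]⟩
      simpa using hmem
    · -- derivative
      obtain ⟨N, hNm, hNn, hNg⟩ := ae_restrict_null_superset' hxd
      rw [Measure.restrict_apply hNm] at hNn
      have hlipinv : LipschitzOnWith (T⁻¹).toNNReal (fun t => T⁻¹ * t) (Set.univ) := by
        apply LipschitzWith.lipschitzOnWith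
        apply LipschitzWith.of_dist_le_mul
        intro t₁ t₂
        rw [Real.dist_eq, Real.dist_eq, ← mul_sub, abs_mul,
          abs_of_pos (show (0:ℝ) < T⁻¹ by positivity),
          Real.coe_toNNReal _ (by positivity)]
      apply ae_restrict_of_null_cover' measurableSet_Ioo
        (lip_image_null' hlipinv (Set.subset_univ _) hNn)
      intro s hs hB
      have hTs : T * s ∈ Ioo 0 T := ⟨mul_pos hT hs.1, by nlinarith [hs.2]⟩
      have hTsN : T * s ∉ N := by
        intro h
        exact hB ⟨T * s, ⟨h, hTs⟩, by field_simp⟩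
      have hP := hNg (T * s) hTsN
      have hgD : HasDerivAt (fun s : ℝ => T * s) T s := by
        simpa using (hasDerivAt_id s).const_mul T
      exact comp_chain' I hP hgD rfl
    · intro i; simpa using hφx i
    · simpa using hψx
  · -- Pareto optimality
    rintro ⟨v', w', τ', y', ⟨hv'm, hv'mem, hw'm, hw'U, hτ'def, hy'c, hy'd, hφ', hψ'⟩, hlt⟩
    -- Integrability of v' on [0,1]
    have hInt : IntegrableOn v' (Icc (0:ℝ) 1) volume := by
      apply Measure.integrableOn_of_bounded (M := A)
      · rw [Real.volume_Icc]; exact ENNReal.ofReal_ne_top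
      · exact hv'm.aestronglyMeasurable
      · rw [ae_restrict_iff' measurableSet_Icc]
        filter_upwards with s hs
        have h := hv'mem s hs
        rw [Real.norm_eq_abs, abs_le]
        constructor <;> nlinarith [h.1, h.2]
    have hII : ∀ s₁ s₂ : ℝ, s₁ ∈ Icc (0:ℝ) 1 → s₂ ∈ Icc (0:ℝ) 1 →
        IntervalIntegrable v' volume s₁ s₂ := by
      intro s₁ s₂ h1 h2
      exact (hInt.mono_set (Set.uIcc_subset_Icc h1 h2)).intervalIntegrable
    have hτdiff : ∀ s₁ s₂ : ℝ, s₁ ∈ Icc (0:ℝ) 1 → s₂ ∈ Icc (0:ℝ) 1 →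
        τ' s₂ - τ' s₁ = ∫ μ in s₁..s₂, v' μ := by
      intro s₁ s₂ h1 h2
      rw [hτ'def, hτ'def]
      exact intervalIntegral.integral_interval_sub_left (hII 0 s₂ (Set.left_mem_Icc.2 zero_le_one) h2)
        (hII 0 s₁ (Set.left_mem_Icc.2 zero_le_one) h1)
    have hbound : ∀ s₁ s₂ : ℝ, s₁ ∈ Icc (0:ℝ) 1 → s₂ ∈ Icc (0:ℝ) 1 → s₁ ≤ s₂ →
        a * (s₂ - s₁) ≤ τ' s₂ - τ' s₁ ∧ τ' s₂ - τ' s₁ ≤ A * (s₂ - s₁) := by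
      intro s₁ s₂ h1 h2 h12
      rw [hτdiff s₁ s₂ h1 h2]
      constructor
      · have hm : ∫ μ in s₁..s₂, a ≤ ∫ μ in s₁..s₂, v' μ :=
          intervalIntegral.integral_mono_on h12 intervalIntegrable_const (hII s₁ s₂ h1 h2)
            (fun z hz => (hv'mem z ⟨le_trans h1.1 hz.1, le_trans hz.2 h2.2⟩).1)
        simpa [smul_eq_mul, mul_comm] using hm
      · have hm : ∫ μ in s₁..s₂, v' μ ≤ ∫ μ in s₁..s₂, A :=
          intervalIntegral.integral_mono_on h12 (hII s₁ s₂ h1 h2) intervalIntegrable_const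
            (fun z hz => (hv'mem z ⟨le_trans h1.1 hz.1, le_trans hz.2 h2.2⟩).2)
        simpa [smul_eq_mul, mul_comm] using hm
    have hτ0 : τ' 0 = 0 := by rw [hτ'def]; simp
    set T' := τ' 1 with hT'def
    have h01 : (0:ℝ) ∈ Icc (0:ℝ) 1 := Set.left_mem_Icc.2 zero_le_one
    have h11 : (1:ℝ) ∈ Icc (0:ℝ) 1 := Set.right_mem_Icc.2 zero_le_one
    have hT'pos : 0 < T' := by
      have h := (hbound 0 1 h01 h11 zero_le_one).1
      rw [hτ0] at h
      nlinarith
    -- clamp function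
    set c : ℝ → ℝ := fun t => max 0 (min t T') with hcdef
    have hc_mem : ∀ t, c t ∈ Icc 0 T' := fun t =>
      ⟨le_max_left _ _, max_le hT'pos.le (min_le_right _ _)⟩
    have hc_eq : ∀ t ∈ Icc (0:ℝ) T', c t = t := by
      intro t ht
      rw [hcdef]
      simp only [min_eq_left ht.2, max_eq_right ht.1]
    have hc_lip : ∀ t₁ t₂ : ℝ, |c t₁ - c t₂| ≤ |t₁ - t₂| := by
      intro t₁ t₂
      rw [hcdef]
      simp only [max_comm (0:ℝ)]
      calc |max (min t₁ T') 0 - max (min t₂ T') 0| ≤ |min t₁ T' - min t₂ T'| :=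
            abs_max_sub_max_le_abs _ _ _
        _ ≤ max |t₁ - t₂| |T' - T'| := abs_min_sub_min_le_max _ _ _ _
        _ = |t₁ - t₂| := by simp
    -- the inverse time change
    set S : ℝ → Set ℝ := fun t => {s ∈ Icc (0:ℝ) 1 | c t ≤ τ' s} with hSdef
    set σ : ℝ → ℝ := fun t => sInf (S t) with hσdef
    have hSne : ∀ t, 1 ∈ S t := fun t => ⟨h11, (hc_mem t).2⟩
    have hSbdd : ∀ t, BddBelow (S t) := fun t => ⟨0, fun s hs => hs.1.1⟩
    have hσ_mem : ∀ t, σ t ∈ Icc (0:ℝ) 1 := fun t =>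
      ⟨le_csInf ⟨1, hSne t⟩ (fun s hs => hs.1.1), csInf_le (hSbdd t) (hSne t)⟩
    have hτσ : ∀ t, τ' (σ t) = c t := by
      intro t
      apply le_antisymm
      · rcases eq_or_lt_of_le (hσ_mem t).1 with h0 | h0
        · rw [← h0, hτ0]
          exact le_max_left _ _
        · apply le_of_forall_pos_le_add
          intro ε hε
          have hεA : 0 < ε / A := by positivity
          set s := max 0 (σ t - ε / A) with hsdef
          have hs_lt : s < σ t := max_lt h0 (by linarith)
          have hs_mem : s ∈ Icc (0:ℝ) 1 := ⟨le_max_left _ _, le_trans hs_lt.le (hσ_mem t).2⟩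
          have hs_not : s ∉ S t := fun hs => absurd (csInf_le (hSbdd t) hs) (not_le.2 hs_lt)
          have hτs : τ' s < c t := by
            by_contra hcon
            exact hs_not ⟨hs_mem, le_of_not_gt hcon⟩
          have hup := (hbound s (σ t) hs_mem (hσ_mem t) hs_lt.le).2
          have hse : σ t - s ≤ ε / A := by
            have := le_max_right 0 (σ t - ε / A)
            rw [hsdef]
            linarith
          have hεe : A * (ε / A) = ε := mul_div_cancel₀ _ (ne_of_gt hA0)
          have hmul : A * (σ t - s) ≤ A * (ε / A) := mul_le_mul_of_nonneg_left hse hA0.le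
          linarith
      · apply le_of_forall_pos_le_add
        intro ε hε
        have hεA : 0 < ε / A := by positivity
        obtain ⟨s, hsS, hs_lt⟩ := exists_lt_of_csInf_lt ⟨1, hSne t⟩
          (show sInf (S t) < σ t + ε / A from by
            have hrfl : sInf (S t) = σ t := rfl
            rw [hrfl]; linarith)
        have hσs : σ t ≤ s := csInf_le (hSbdd t) hsS
        have hup := (hbound (σ t) s (hσ_mem t) hsS.1 hσs).2
        have hεe : A * (ε / A) = ε := mul_div_cancel₀ _ (ne_of_gt hA0)
        have hmul : A * (s - σ t) ≤ A * (ε / A) :=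
          mul_le_mul_of_nonneg_left (by linarith) hA0.le
        linarith [hsS.2]
    have hc0 : c 0 = 0 := by
      rw [hcdef]
      simp [min_eq_left hT'pos.le]
    have hσ0 : σ 0 = 0 := by
      by_contra h
      have h0 : 0 < σ 0 := lt_of_le_of_ne (hσ_mem 0).1 (Ne.symm h)
      have hb := (hbound 0 (σ 0) h01 (hσ_mem 0) h0.le).1
      rw [hτ0, hτσ 0, hc0] at hb
      nlinarith
    have hσT' : σ T' = 1 := by
      by_contra h
      have h1 : σ T' < 1 := lt_of_le_of_ne (hσ_mem T').2 h
      have hb := (hbound (σ T') 1 (hσ_mem T') h11 h1.le).1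
      rw [hτσ T', hc_eq T' ⟨hT'pos.le, le_refl _⟩] at hb
      nlinarith
    have hτσ_id : ∀ t ∈ Icc (0:ℝ) T', τ' (σ t) = t := fun t ht => by rw [hτσ, hc_eq t ht]
    have hlip_low : ∀ s₁ s₂ : ℝ, s₁ ∈ Icc (0:ℝ) 1 → s₂ ∈ Icc (0:ℝ) 1 →
        a * |s₂ - s₁| ≤ |τ' s₂ - τ' s₁| := by
      intro s₁ s₂ h1 h2
      rcases le_total s₁ s₂ with h | h
      · have hb := (hbound s₁ s₂ h1 h2 h).1
        rw [abs_of_nonneg (by linarith), abs_of_nonneg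
          (by nlinarith [mul_nonneg ha.le (sub_nonneg.2 h)])]
        exact hb
      · have hb := (hbound s₂ s₁ h2 h1 h).1
        rw [abs_of_nonpos (by linarith), abs_of_nonpos
          (by nlinarith [mul_nonneg ha.le (sub_nonneg.2 h)])]
        linarith
    have hσlip : LipschitzWith (a⁻¹).toNNReal σ := by
      apply LipschitzWith.of_dist_le_mul
      intro t₁ t₂
      rw [Real.dist_eq, Real.dist_eq, Real.coe_toNNReal _ (by positivity)]
      have h1 := hlip_low (σ t₂) (σ t₁) (hσ_mem t₂) (hσ_mem t₁)
      rw [hτσ, hτσ] at h1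
      have h2 := hc_lip t₁ t₂
      rw [← mul_le_mul_iff_of_pos_left ha, ← mul_assoc, mul_inv_cancel₀ (ne_of_gt ha), one_mul]
      linarith
    have hσcont := hσlip.continuous
    have hσmeas := hσcont.measurable
    have hτlip : LipschitzOnWith A.toNNReal τ' (Icc (0:ℝ) 1) := by
      rw [lipschitzOnWith_iff_dist_le_mul]
      intro s₂ h2 s₁ h1
      rw [Real.dist_eq, Real.dist_eq, Real.coe_toNNReal _ hA0.le]
      rcases le_total s₁ s₂ with h | h
      · have hb := (hbound s₁ s₂ h1 h2 h).2
        have hb' := (hbound s₁ s₂ h1 h2 h).1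
        rw [abs_of_nonneg (by nlinarith [mul_nonneg ha.le (sub_nonneg.2 h)]),
          abs_of_nonneg (by linarith)]
        linarith
      · have hb := (hbound s₂ s₁ h2 h1 h).2
        have hb' := (hbound s₂ s₁ h2 h1 h).1
        rw [abs_of_nonpos (by nlinarith [mul_nonneg ha.le (sub_nonneg.2 h)]),
          abs_of_nonpos (by linarith)]
        linarith
    -- Lebesgue differentiation of τ'
    set v₀ : ℝ → ℝ := (Icc (0:ℝ) 1).indicator v' with hv₀def
    have hv₀int : Integrable v₀ := (integrable_indicator_iff measurableSet_Icc).2 hInt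
    have hFTC := ae_hasDerivAt_of_integrable' hv₀int
    have hτeq : ∀ t ∈ Icc (0:ℝ) 1, τ' t = ∫ μ in (0:ℝ)..t, v₀ μ := by
      intro t ht
      rw [hτ'def]
      apply intervalIntegral.integral_congr
      intro z hz
      have hz1 : z ∈ Icc (0:ℝ) 1 := Set.uIcc_subset_Icc h01 ht hz
      exact (Set.indicator_of_mem hz1 v').symm
    have hτ'd_ae : ∀ᵐ s ∂(volume.restrict (Ioo (0:ℝ) 1)), HasDerivAt τ' (v' s) s := by
      filter_upwards [ae_restrict_of_ae hFTC, ae_restrict_mem measurableSet_Ioo] with s hs hsmem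
      have heq : τ' =ᶠ[nhds s] (fun t => ∫ μ in (0:ℝ)..t, v₀ μ) := by
        apply Filter.eventually_of_mem (isOpen_Ioo.mem_nhds hsmem)
        intro t ht
        exact hτeq t (Set.Ioo_subset_Icc_self ht)
      have hD := hs.congr_of_eventuallyEq heq
      have hveq : v₀ s = v' s := by
        rw [hv₀def]
        exact Set.indicator_of_mem (Set.Ioo_subset_Icc_self hsmem) v'
      rwa [hveq] at hD
    have hgood := hy'd.and hτ'd_ae
    obtain ⟨N, hNm, hNn, hNg⟩ := ae_restrict_null_superset' hgood
    rw [Measure.restrict_apply hNm] at hNn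
    -- reparametrized trajectory
    apply hopt
    refine ⟨fun t => w' (σ t), fun t => y' (σ t), T', ⟨hT'pos, hw'm.comp hσmeas,
      fun t => hw'U _, ⟨?_, ?_⟩, ?_, ?_⟩, ?_⟩
    · exact hy'c.comp hσcont.continuousOn (fun t _ => hσ_mem t)
    · -- a.e. derivative of the reparametrized curve
      have hnull : volume (τ' '' (N ∩ Ioo (0:ℝ) 1)) = 0 :=
        lip_image_null' hτlip (fun z hz => Set.Ioo_subset_Icc_self hz.2) hNn
      apply ae_restrict_of_null_cover' measurableSet_Ioo hnull
      intro t ht hB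
      have hct : c t = t := hc_eq t (Set.Ioo_subset_Icc_self ht)
      have hτσt : τ' (σ t) = t := by rw [hτσ, hct]
      have hσt0 : σ t ≠ 0 := by
        intro h
        rw [h, hτ0] at hτσt
        exact absurd hτσt.symm (ne_of_gt ht.1)
      have hσt1 : σ t ≠ 1 := by
        intro h
        rw [h] at hτσt
        exact absurd hτσt (ne_of_gt ht.2)
      have hσIoo : σ t ∈ Ioo (0:ℝ) 1 :=
        ⟨lt_of_le_of_ne (hσ_mem t).1 (Ne.symm hσt0), lt_of_le_of_ne (hσ_mem t).2 hσt1⟩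
      have hσtN : σ t ∉ N := fun h => hB ⟨σ t, ⟨h, hσIoo⟩, hτσt⟩
      obtain ⟨hyD, hτD⟩ := hNg (σ t) hσtN
      have hvpos : 0 < v' (σ t) := lt_of_lt_of_le ha (hv'mem _ (hσ_mem t)).1
      have hσD : HasDerivAt σ (v' (σ t))⁻¹ t := by
        apply HasDerivAt.of_local_left_inverse hσcont.continuousAt hτD (ne_of_gt hvpos)
        apply Filter.eventually_of_mem (isOpen_Ioo.mem_nhds ht)
        intro s hs
        exact hτσ_id s (Set.Ioo_subset_Icc_self hs)
      rw [hτσt] at hyD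
      exact comp_chain' I hyD hσD
        (by rw [smul_smul, inv_mul_cancel₀ (ne_of_gt hvpos), one_smul])
    · intro i
      simp only [hσ0, hσT']
      exact hφ' i
    · simp only [hσ0, hσT']
      exact hψ'
    · intro i
      simp only [hσ0, hσT']
      simpa using hlt i



end
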